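/- Fix integers r ≥ 1, an unbounded nondecreasing availability function t : ℕ → ℕ, and a constant c ≥ 3. For each n, let p_n = (1/2)·(1 − (c·log₂ n / t(n))^{1/(2r)}) (assume n is large enough that 0 < c·log₂ n / t(n) < 1), and suppose every index i ∈ {1, …, n} has t(n) pairwise disjoint recovery sets of size r in {1, …, n} \ {i}. Call an error vector e ∈ 𝔽₂^n of Hamming weight w_n = p_n·n uncorrectable if there exists an index i for which at least t(n)/2 of its recovery-set parities Σ_{u∈R^{j,i}} e_u equal 1. Then the fraction (number of uncorrectable weight-w_n vectors)/(number of all weight-w_n vectors) tends to 0 as n → ∞. -/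

import Mathlib

open Finset Filter

def hammingWt {n : ℕ} (e : Fin n → ZMod 2) : ℕ :=
  (univ.filter (fun u => e u = 1)).card

lemma zmod2_cases (v : ZMod 2) : v = 0 ∨ v = 1 := by revert v; decide

noncomputable def chi : ZMod 2 → ℝ := fun v => if v = 1 then -1 else 1

lemma chi_add (x y : ZMod 2) : chi (x + y) = chi x * chi y := by
  rcases zmod2_cases x with rfl | rfl <;> rcases zmod2_cases y with rfl | rfl <;>
    simp [chi, show (1 + 1 : ZMod 2) = 0 from by decide, show (0 : ZMod 2) ≠ 1 from by decide]

lemma chi_sum {α : Type*} (s : Finset α) (e : α → ZMod 2) :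
    chi (∑ u ∈ s, e u) = ∏ u ∈ s, chi (e u) := by
  classical
  induction s using Finset.induction with
  | empty => simp [chi, show (0 : ZMod 2) ≠ 1 from by decide]
  | insert a s h ih => rw [Finset.sum_insert h, Finset.prod_insert h, chi_add, ih]

noncomputable def wgt (θ : ℝ) : ZMod 2 → ℝ := fun v => if v = 1 then θ else 1 - θ

lemma sum_univ_zmod2 (f : ZMod 2 → ℝ) : ∑ v : ZMod 2, f v = f 0 + f 1 := by
  have h : (univ : Finset (ZMod 2)) = {0, 1} := by decide
  rw [h, Finset.sum_insert (by decide), Finset.sum_singleton]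

lemma hammingWt_le {n : ℕ} (e : Fin n → ZMod 2) : hammingWt e ≤ n := by
  simpa [hammingWt] using (Finset.card_filter_le univ (fun u => e u = 1)).trans_eq (by simp)

lemma filter_not_card {n : ℕ} (e : Fin n → ZMod 2) :
    (univ.filter (fun u => ¬ e u = 1)).card = n - hammingWt e := by
  classical
  have := Finset.card_filter_add_card_filter_not (s := (univ : Finset (Fin n)))
    (p := fun u => e u = 1)
  simp only [Finset.card_univ, Fintype.card_fin] at this
  have h2 : hammingWt e ≤ n := hammingWt_le e
  rw [hammingWt] at *
  omega

lemma W_eq {n : ℕ} (θ : ℝ) (e : Fin n → ZMod 2) :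
    ∏ u, wgt θ (e u) = θ ^ (hammingWt e) * (1 - θ) ^ (n - hammingWt e) := by
  have h1 : (∏ u, wgt θ (e u)) =
      (∏ u ∈ univ.filter (fun u => e u = 1), θ) *
      ∏ u ∈ univ.filter (fun u => ¬ e u = 1), (1 - θ) := Finset.prod_ite _ _
  rw [h1, Finset.prod_const, Finset.prod_const, hammingWt, filter_not_card, hammingWt]

lemma count_weight {n w : ℕ} :
    (univ.filter (fun e : Fin n → ZMod 2 => hammingWt e = w)).card = n.choose w := by
  classical
  have h : (Finset.powersetCard w (univ : Finset (Fin n))).card = n.choose w := by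
    simp [Finset.card_powersetCard]
  rw [← h]
  refine Finset.card_bij' (fun e _ => univ.filter (fun u => e u = 1))
    (fun S _ => (fun u => if u ∈ S then (1 : ZMod 2) else 0)) ?_ ?_ ?_ ?_
  · intro e he
    simp only [Finset.mem_filter, Finset.mem_univ, true_and] at he
    simp only [Finset.mem_powersetCard]
    exact ⟨Finset.filter_subset _ _, he⟩
  · intro S hS
    simp only [Finset.mem_powersetCard] at hS
    rw [Finset.mem_filter]; refine ⟨Finset.mem_univ _, ?_⟩; simp only [hammingWt]
    rw [← hS.2]
    congr 1
    ext u
    simp only [Finset.mem_filter, Finset.mem_univ, true_and]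
    by_cases h : u ∈ S <;> simp [h]
  · intro e he
    funext u
    rcases zmod2_cases (e u) with h | h <;> simp [h]
  · intro S hS
    ext u
    simp only [Finset.mem_filter, Finset.mem_univ, true_and]
    by_cases h : u ∈ S <;> simp [h]

lemma binom_sum_one (n : ℕ) (θ : ℝ) :
    ∑ k ∈ range (n+1), (n.choose k : ℝ) * θ^k * (1-θ)^(n-k) = 1 := by
  calc ∑ k ∈ range (n+1), (n.choose k : ℝ) * θ^k * (1-θ)^(n-k)
      = ∑ k ∈ range (n+1), θ^k * (1-θ)^(n-k) * (n.choose k : ℝ) :=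
        Finset.sum_congr rfl (fun k _ => by ring)
    _ = (θ + (1-θ))^n := (add_pow θ (1-θ) n).symm
    _ = 1 := by norm_num

lemma factor {n t r : ℕ} (θ : ℝ) (B : Fin t → Finset (Fin n))
    (hdisj : ∀ j j', j ≠ j' → Disjoint (B j) (B j')) (hcard : ∀ j, (B j).card = r)
    (g : ZMod 2 → ℝ) :
    ∑ e : Fin n → ZMod 2, (∏ u, wgt θ (e u)) * ∏ j, g (∑ u ∈ B j, e u)
      = ((g 0 + g 1)/2 + (g 0 - g 1)/2 * (1 - 2*θ)^r)^t := by
  classical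
  set a : ℝ := (g 0 + g 1)/2 with ha
  set b : ℝ := (g 0 - g 1)/2 with hb
  have hg : ∀ v, g v = b * chi v + a := by
    intro v
    rcases zmod2_cases v with rfl | rfl <;>
      simp [chi, ha, hb, show (0 : ZMod 2) ≠ 1 from by decide] <;> ring
  have expand : ∀ e : Fin n → ZMod 2,
      (∏ j, g (∑ u ∈ B j, e u))
        = ∑ s : Finset (Fin t), (∏ j ∈ s, (b * chi (∑ u ∈ B j, e u))) * ∏ j ∈ sᶜ, a := by
    intro e
    rw [show (∏ j, g (∑ u ∈ B j, e u)) = ∏ j, ((b * chi (∑ u ∈ B j, e u)) + a) from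
      Finset.prod_congr rfl (fun j _ => hg _)]
    exact Fintype.prod_add _ _
  have step1 : ∑ e : Fin n → ZMod 2, (∏ u, wgt θ (e u)) * ∏ j, g (∑ u ∈ B j, e u)
      = ∑ s : Finset (Fin t), b ^ s.card * a ^ sᶜ.card *
          ∑ e : Fin n → ZMod 2, (∏ u, wgt θ (e u)) * ∏ u ∈ s.biUnion B, chi (e u) := by
    rw [Finset.sum_congr rfl (fun e _ => by rw [expand e, Finset.mul_sum])]
    rw [Finset.sum_comm]
    refine Finset.sum_congr rfl (fun s _ => ?_)
    rw [Finset.mul_sum]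
    refine Finset.sum_congr rfl (fun e _ => ?_)
    have h1 : (∏ j ∈ s, (b * chi (∑ u ∈ B j, e u))) = b ^ s.card * ∏ j ∈ s, chi (∑ u ∈ B j, e u) := by
      rw [Finset.prod_mul_distrib, Finset.prod_const]
    have h2 : (∏ j ∈ s, chi (∑ u ∈ B j, e u)) = ∏ u ∈ s.biUnion B, chi (e u) := by
      rw [Finset.prod_biUnion]
      · exact Finset.prod_congr rfl (fun j _ => chi_sum _ _)
      · intro j _ j' _ hjj'
        exact hdisj j j' hjj'
    rw [h1, h2, Finset.prod_const]
    ring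
  have inner : ∀ s : Finset (Fin t),
      (∑ e : Fin n → ZMod 2, (∏ u, wgt θ (e u)) * ∏ u ∈ s.biUnion B, chi (e u))
        = (1 - 2*θ) ^ (r * s.card) := by
    intro s
    set U := s.biUnion B with hU
    have hstep : ∀ e : Fin n → ZMod 2,
        (∏ u, wgt θ (e u)) * ∏ u ∈ U, chi (e u)
          = ∏ u, (wgt θ (e u) * (if u ∈ U then chi (e u) else 1)) := by
      intro e
      rw [Finset.prod_mul_distrib]
      congr 1
      rw [← Finset.prod_filter]
      congr 1
      simp [Finset.filter_mem_eq_inter]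
    rw [Finset.sum_congr rfl (fun e _ => hstep e)]
    rw [← Fintype.prod_sum (fun u v => wgt θ v * (if u ∈ U then chi v else 1))]
    have hval : ∀ u : Fin n, (∑ v : ZMod 2, wgt θ v * (if u ∈ U then chi v else 1))
        = if u ∈ U then (1 - 2*θ) else 1 := by
      intro u
      by_cases h : u ∈ U
      · simp only [h, if_true]
        rw [sum_univ_zmod2]
        simp only [wgt, chi, show (0 : ZMod 2) ≠ 1 from by decide, if_false, if_true,
          if_neg (show ¬ (0:ZMod 2) = 1 from by decide)]
        ring
      · simp only [h, if_false]
        rw [sum_univ_zmod2]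
        simp only [wgt, if_neg (show ¬ (0:ZMod 2) = 1 from by decide), if_pos rfl, mul_one]
        norm_num
    rw [Finset.prod_congr rfl (fun u _ => hval u), Fintype.prod_ite_mem U (fun _ => (1-2*θ)),
      Finset.prod_const, hU, Finset.card_biUnion (fun j _ j' _ h => hdisj j j' h)]
    rw [Finset.sum_congr rfl (fun j _ => hcard j), Finset.sum_const, smul_eq_mul, Nat.mul_comm]
  rw [step1, Finset.sum_congr rfl (fun s _ => by rw [inner s])]
  have final : ∀ s : Finset (Fin t),
      b ^ s.card * a ^ sᶜ.card * (1 - 2*θ) ^ (r * s.card)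
        = (∏ j ∈ s, (b * (1-2*θ)^r)) * ∏ j ∈ sᶜ, a := by
    intro s
    rw [Finset.prod_const, Finset.prod_const, mul_pow, pow_mul]
    ring
  rw [Finset.sum_congr rfl (fun s _ => final s), ← Fintype.prod_add, Finset.prod_const]
  rw [Finset.card_univ, Fintype.card_fin]
  congr 1
  ring


lemma mode_bound {n w : ℕ} (hn : 0 < n) (hwn : w ≤ n) :
    (1 : ℝ)/(n+1) ≤ (n.choose w : ℝ) * ((w:ℝ)/n)^w * (1 - (w:ℝ)/n)^(n-w) := by
  set θ : ℝ := (w:ℝ)/n with hθ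
  have hn' : (0:ℝ) < n := by exact_mod_cast hn
  have hθ0 : 0 ≤ θ := by positivity
  have hθ1 : θ ≤ 1 := by
    rw [hθ, div_le_one hn']; exact_mod_cast hwn
  have hθ1' : 0 ≤ 1 - θ := by linarith
  set f : ℕ → ℝ := fun k => (n.choose k : ℝ) * θ^k * (1-θ)^(n-k) with hf
  have cast_sub : ((n - w : ℕ) : ℝ) = (n:ℝ) - w := Nat.cast_sub hwn
  have key : ∀ k, k ≤ n → f k ≤ f w := by
    have up : ∀ k, k < w → f k ≤ f (k+1) := by
      intro k hk
      have hkn : k < n := lt_of_lt_of_le hk hwn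
      have hnat : n.choose k * (n - w) ≤ n.choose (k+1) * w := by
        have h1 : n.choose (k+1) * (k+1) = n.choose k * (n - k) :=
          Nat.choose_succ_right_eq n k
        have h2 : n.choose k * (n - w) * (k+1) ≤ n.choose (k+1) * w * (k+1) := by
          calc n.choose k * (n - w) * (k+1) ≤ n.choose k * ((n - k) * w) := by
                have : (n - w) * (k+1) ≤ (n - k) * w :=
                  Nat.mul_le_mul (by omega) (by omega)
                rw [mul_assoc]; exact Nat.mul_le_mul_left _ this
            _ = n.choose (k+1) * w * (k+1) := by rw [← mul_assoc, ← h1]; ring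
        exact Nat.le_of_mul_le_mul_right h2 (Nat.succ_pos k)
      have hreal : (n.choose k : ℝ) * (1 - θ) ≤ (n.choose (k+1) : ℝ) * θ := by
        have hc : (n.choose k : ℝ) * ((n:ℝ) - w) ≤ (n.choose (k+1) : ℝ) * w := by
          have := (Nat.cast_le (α := ℝ)).mpr hnat
          push_cast [cast_sub] at this
          linarith [this]
        have h1θ : 1 - θ = ((n:ℝ) - w)/n := by rw [hθ]; field_simp
        rw [h1θ, hθ, ← mul_div_assoc, ← mul_div_assoc]
        exact (div_le_div_iff_of_pos_right hn').mpr hc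
      have hsplit : n - k = (n - (k+1)) + 1 := by omega
      have hθk : (0:ℝ) ≤ θ^k * (1-θ)^(n-(k+1)) :=
        mul_nonneg (pow_nonneg hθ0 _) (pow_nonneg hθ1' _)
      calc f k = ((n.choose k : ℝ) * (1-θ)) * (θ^k * (1-θ)^(n-(k+1))) := by
            rw [hf]; simp only; rw [hsplit, pow_succ]; ring
        _ ≤ ((n.choose (k+1) : ℝ) * θ) * (θ^k * (1-θ)^(n-(k+1))) :=
            mul_le_mul_of_nonneg_right hreal hθk
        _ = f (k+1) := by rw [hf]; simp only; rw [pow_succ]; ring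
    have down : ∀ k, w ≤ k → k < n → f (k+1) ≤ f k := by
      intro k hk hkn
      have hnat : n.choose (k+1) * w ≤ n.choose k * (n - w) := by
        have h1 : n.choose (k+1) * (k+1) = n.choose k * (n - k) :=
          Nat.choose_succ_right_eq n k
        have h2 : n.choose (k+1) * w * (k+1) ≤ n.choose k * (n - w) * (k+1) := by
          calc n.choose (k+1) * w * (k+1) = n.choose k * ((n - k) * w) := by
                rw [← mul_assoc, ← h1]; ring
            _ ≤ n.choose k * ((n - w) * (k+1)) :=
                Nat.mul_le_mul_left _ (Nat.mul_le_mul (by omega) (by omega))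
            _ = n.choose k * (n - w) * (k+1) := by ring
        exact Nat.le_of_mul_le_mul_right h2 (Nat.succ_pos k)
      have hreal : (n.choose (k+1) : ℝ) * θ ≤ (n.choose k : ℝ) * (1 - θ) := by
        have hc : (n.choose (k+1) : ℝ) * w ≤ (n.choose k : ℝ) * ((n:ℝ) - w) := by
          have := (Nat.cast_le (α := ℝ)).mpr hnat
          push_cast [cast_sub] at this
          linarith [this]
        have h1θ : 1 - θ = ((n:ℝ) - w)/n := by rw [hθ]; field_simp
        rw [h1θ, hθ, ← mul_div_assoc, ← mul_div_assoc]
        exact (div_le_div_iff_of_pos_right hn').mpr hc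
      have hsplit : n - k = (n - (k+1)) + 1 := by omega
      have hθk : (0:ℝ) ≤ θ^k * (1-θ)^(n-(k+1)) :=
        mul_nonneg (pow_nonneg hθ0 _) (pow_nonneg hθ1' _)
      calc f (k+1) = ((n.choose (k+1) : ℝ) * θ) * (θ^k * (1-θ)^(n-(k+1))) := by
            rw [hf]; simp only; rw [pow_succ]; ring
        _ ≤ ((n.choose k : ℝ) * (1-θ)) * (θ^k * (1-θ)^(n-(k+1))) :=
            mul_le_mul_of_nonneg_right hreal hθk
        _ = f k := by rw [hf]; simp only; rw [hsplit, pow_succ]; ring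
    intro k hk
    rcases le_or_gt k w with h | h
    · obtain ⟨d, hd⟩ : ∃ d, k + d = w := ⟨w - k, by omega⟩
      clear hk h
      induction d generalizing k with
      | zero => simp at hd; rw [hd]
      | succ d ih =>
        calc f k ≤ f (k+1) := up k (by omega)
          _ ≤ f w := ih (k+1) (by omega)
    · obtain ⟨d, hd⟩ : ∃ d, w + d = k := ⟨k - w, by omega⟩
      subst hd
      clear h
      induction d with
      | zero => simp
      | succ d ih =>
        calc f (w + (d+1)) = f ((w+d) + 1) := by ring_nf
          _ ≤ f (w + d) := down (w+d) (by omega) (by omega)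
          _ ≤ f w := ih (by omega)
  have h2 : (1:ℝ) ≤ ((n:ℝ)+1) * ((n.choose w : ℝ) * θ^w * (1-θ)^(n-w)) := by
    have h1 := binom_sum_one n θ
    have h2 : ∑ k ∈ range (n+1), f k ≤ (range (n+1)).card • f w :=
      Finset.sum_le_card_nsmul _ _ _ (fun k hk => key k (by
        simp only [Finset.mem_range] at hk; omega))
    rw [Finset.card_range, nsmul_eq_mul] at h2
    simp only [hf] at h2
    rw [h1] at h2
    push_cast at h2 ⊢
    linarith
  rw [div_le_iff₀ (by positivity)]
  linarith [h2, mul_comm ((n:ℝ)+1) ((n.choose w : ℝ) * ((w:ℝ)/n)^w * (1 - (w:ℝ)/n)^(n-w))]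

set_option maxHeartbeats 1000000 in
lemma per_n_bound (n tn r : ℕ) (hn : 1 ≤ n) (htn : 1 ≤ tn) (hr : 1 ≤ r)
    (c : ℝ) (hx0 : 0 < c * Real.logb 2 n / tn) (hx1 : c * Real.logb 2 n / tn < 1)
    (B : Fin n → Fin tn → Finset (Fin n))
    (hdisj : ∀ (i : Fin n) (j j' : Fin tn), j ≠ j' → Disjoint (B i j) (B i j'))
    (hcard : ∀ (i : Fin n) (j : Fin tn), (B i j).card = r)
    (w : ℕ)
    (hw : w = ⌊(1 / 2 : ℝ) * (1 - (c * Real.logb 2 n / tn) ^ (1 / (2 * (r : ℝ)))) * n⌋₊) :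
    ((univ.filter (fun e : Fin n → ZMod 2 => hammingWt e = w ∧
        ∃ i : Fin n, tn ≤ 2 * (univ.filter
          (fun j : Fin tn => ∑ u ∈ B i j, e u = 1)).card)).card : ℝ)
      / ((univ.filter (fun e : Fin n → ZMod 2 => hammingWt e = w)).card : ℝ)
    ≤ ((n:ℝ)+1) * ((n:ℝ) * Real.exp (-(c * Real.logb 2 n)/2)) := by
  classical
  set x : ℝ := c * Real.logb 2 n / tn with hxdef
  have hn' : (0:ℝ) < n := by exact_mod_cast hn
  have htn' : (0:ℝ) < tn := by exact_mod_cast htn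
  have hr' : (0:ℝ) < r := by exact_mod_cast hr
  have hexp : (0:ℝ) < 1/(2*(r:ℝ)) := by positivity
  set y : ℝ := x ^ (1/(2*(r:ℝ))) with hydef
  have hy0 : 0 < y := Real.rpow_pos_of_pos hx0 _
  have hy1 : y < 1 := Real.rpow_lt_one (le_of_lt hx0) hx1 hexp
  set p : ℝ := (1/2:ℝ) * (1 - y) with hpdef
  have hp0 : 0 < p := by rw [hpdef]; linarith
  have hp2 : p < 1/2 := by rw [hpdef]; linarith
  have hwle : (w:ℝ) ≤ p * n := by
    rw [hw, hpdef, hydef, hxdef]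
    exact Nat.floor_le (by positivity)
  have hwn2 : (w:ℝ) < (n:ℝ)/2 := lt_of_le_of_lt hwle (by
    have h := mul_lt_mul_of_pos_right hp2 hn'
    linarith)
  have hwn : w ≤ n := by
    have : (w:ℝ) ≤ n := by linarith
    exact_mod_cast this
  have hden : (((univ.filter (fun e : Fin n → ZMod 2 => hammingWt e = w)).card : ℕ) : ℝ)
      = (n.choose w : ℝ) := by rw [count_weight]
  have hchoose_pos : (0:ℝ) < (n.choose w : ℝ) := by exact_mod_cast Nat.choose_pos hwn
  by_cases hw0 : w = 0
  · have hempty : (univ.filter (fun e : Fin n → ZMod 2 => hammingWt e = w ∧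
        ∃ i : Fin n, tn ≤ 2 * (univ.filter
          (fun j : Fin tn => ∑ u ∈ B i j, e u = 1)).card)) = ∅ := by
      rw [Finset.filter_eq_empty_iff]
      rintro e -
      rintro ⟨hwt, i, hi⟩
      have he0 : ∀ u, e u = 0 := by
        intro u
        rcases zmod2_cases (e u) with h | h
        · exact h
        · exfalso
          have hmem : u ∈ univ.filter (fun u => e u = 1) := by simp [h]
          rw [hw0, hammingWt] at hwt
          rw [Finset.card_eq_zero.mp hwt] at hmem
          exact absurd hmem (Finset.notMem_empty u)
      have hpar : (univ.filter (fun j : Fin tn => ∑ u ∈ B i j, e u = 1)) = ∅ :=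
        Finset.filter_eq_empty_iff.mpr (by
          intro j _
          rw [Finset.sum_congr rfl (fun u _ => he0 u), Finset.sum_const, smul_zero]
          exact (show ((0:ZMod 2) ≠ 1) from by decide))
      rw [hpar] at hi
      simp at hi
      omega
    rw [hempty]
    simp only [Finset.card_empty, Nat.cast_zero, zero_div]
    positivity
  -- main case
  · have hw1 : 1 ≤ w := Nat.one_le_iff_ne_zero.mpr hw0
    have hw1' : (1:ℝ) ≤ w := by exact_mod_cast hw1
    set θ : ℝ := (w:ℝ)/n with hθdef
    have hθ0 : 0 < θ := by rw [hθdef]; positivity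
    have hθle : θ ≤ p := by rw [hθdef, div_le_iff₀ hn']; linarith [hwle]
    have hθ2 : θ < 1/2 := lt_of_le_of_lt hθle hp2
    have h12θ0 : 0 < 1 - 2*θ := by linarith
    have h12θ1 : 1 - 2*θ < 1 := by linarith
    obtain ⟨A, hA⟩ : ∃ A : ℝ, A = (1-2*θ)^r := ⟨_, rfl⟩
    have hA0 : 0 < A := hA ▸ pow_pos h12θ0 r
    have hA1 : A < 1 := hA ▸ pow_lt_one₀ (le_of_lt h12θ0) h12θ1 (by omega)
    obtain ⟨q, hq⟩ : ∃ q : ℝ, q = (1 - A)/2 := ⟨_, rfl⟩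
    have hq0 : 0 < q := by rw [hq]; linarith
    have hq2 : q < 1/2 := by rw [hq]; linarith
    obtain ⟨lam, hlam⟩ : ∃ lam : ℝ, lam = (1-q)/q := ⟨_, rfl⟩
    have hlam1 : 1 < lam := by rw [hlam, lt_div_iff₀ hq0]; linarith
    have hlam0 : 0 < lam := lt_trans one_pos hlam1
    set g : ZMod 2 → ℝ := fun v => if v = 1 then lam else 1 with hgdef
    have hg0 : g 0 = 1 := by
      simp [hgdef, show ¬ ((0:ZMod 2) = 1) from by decide]
    have hg1 : g 1 = lam := by simp [hgdef]
    have hAq : A = 1 - 2*q := by rw [hq]; ring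
    have hfac : ∀ i : Fin n,
        ∑ e : Fin n → ZMod 2, (∏ u, wgt θ (e u)) * ∏ j, g (∑ u ∈ B i j, e u)
          = (2*(1-q))^tn := by
      intro i
      rw [factor θ (B i) (hdisj i) (hcard i) g]
      congr 1
      rw [hg0, hg1, ← hA, hAq, hlam]
      field_simp
      ring
    set D : ℝ := θ^w * (1-θ)^(n-w) with hD
    have h1θ : 0 < 1 - θ := by linarith
    have hD0 : 0 < D := by rw [hD]; positivity
    set L : ℝ := lam ^ ((tn:ℝ)/2) with hL
    have hL0 : 0 < L := Real.rpow_pos_of_pos hlam0 _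
    have hWe : ∀ e : Fin n → ZMod 2, hammingWt e = w → (∏ u, wgt θ (e u)) = D := by
      intro e he; rw [W_eq, he, hD]
    have hWnonneg : ∀ e : Fin n → ZMod 2, 0 ≤ ∏ u, wgt θ (e u) := by
      intro e
      apply Finset.prod_nonneg
      intro u _
      rcases zmod2_cases (e u) with h | h
      · have hv : wgt θ (e u) = 1 - θ := by
          rw [h]; simp only [wgt, if_neg (show ¬ ((0:ZMod 2) = 1) from by decide)]
        rw [hv]; linarith
      · have hv : wgt θ (e u) = θ := by
          rw [h]; simp [wgt]
        rw [hv]; linarith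
    have hgnonneg : ∀ (i : Fin n) (e : Fin n → ZMod 2),
        0 ≤ ∏ j, g (∑ u ∈ B i j, e u) := by
      intro i e
      apply Finset.prod_nonneg
      intro j _
      rw [hgdef]
      dsimp only
      split <;> linarith
    have hgprod : ∀ (i : Fin n) (e : Fin n → ZMod 2),
        (∏ j, g (∑ u ∈ B i j, e u))
          = lam ^ ((univ.filter (fun j : Fin tn => ∑ u ∈ B i j, e u = 1)).card : ℕ) := by
      intro i e
      have h1 : (∏ j, g (∑ u ∈ B i j, e u)) =
          (∏ j ∈ univ.filter (fun j : Fin tn => (∑ u ∈ B i j, e u) = 1), lam) *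
          ∏ j ∈ univ.filter (fun j : Fin tn => ¬ (∑ u ∈ B i j, e u) = 1), (1:ℝ) :=
        Finset.prod_ite _ _
      rw [h1, Finset.prod_const, Finset.prod_const, one_pow, mul_one]
    have hgub : ∀ (i : Fin n) (e : Fin n → ZMod 2),
        tn ≤ 2 * (univ.filter (fun j : Fin tn => ∑ u ∈ B i j, e u = 1)).card →
        L ≤ ∏ j, g (∑ u ∈ B i j, e u) := by
      intro i e hcond
      rw [hgprod i e]
      set K := (univ.filter (fun j : Fin tn => ∑ u ∈ B i j, e u = 1)).card with hK
      have hK2 : ((tn:ℝ)/2) ≤ (K:ℝ) := by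
        have : (tn : ℝ) ≤ 2 * K := by exact_mod_cast hcond
        linarith
      calc L = lam ^ ((tn:ℝ)/2) := hL
        _ ≤ lam ^ ((K:ℝ)) := Real.rpow_le_rpow_of_exponent_le (le_of_lt hlam1) hK2
        _ = lam ^ (K:ℕ) := Real.rpow_natCast lam K
    have hcount : ∀ i : Fin n,
        (((univ.filter (fun e : Fin n → ZMod 2 => hammingWt e = w ∧
            tn ≤ 2 * (univ.filter (fun j : Fin tn => ∑ u ∈ B i j, e u = 1)).card)).card : ℕ) : ℝ)
          * (D * L) ≤ (2*(1-q))^tn := by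
      intro i
      rw [← hfac i]
      set F := univ.filter (fun e : Fin n → ZMod 2 => hammingWt e = w ∧
          tn ≤ 2 * (univ.filter (fun j : Fin tn => ∑ u ∈ B i j, e u = 1)).card) with hF
      calc ((F.card : ℕ) : ℝ) * (D * L) = ∑ _e ∈ F, (D * L) := by
            rw [Finset.sum_const, nsmul_eq_mul]
        _ ≤ ∑ e ∈ F, (∏ u, wgt θ (e u)) * ∏ j, g (∑ u ∈ B i j, e u) := by
            apply Finset.sum_le_sum
            intro e he
            rw [hF, Finset.mem_filter] at he
            obtain ⟨-, hwt, hcond⟩ := he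
            rw [hWe e hwt]
            exact mul_le_mul_of_nonneg_left (hgub i e hcond) (le_of_lt hD0)
        _ ≤ ∑ e : Fin n → ZMod 2, (∏ u, wgt θ (e u)) * ∏ j, g (∑ u ∈ B i j, e u) := by
            apply Finset.sum_le_sum_of_subset_of_nonneg (Finset.filter_subset _ _)
            intro e _ _
            exact mul_nonneg (hWnonneg e) (hgnonneg i e)
    set Num := univ.filter (fun e : Fin n → ZMod 2 => hammingWt e = w ∧
        ∃ i : Fin n, tn ≤ 2 * (univ.filter
          (fun j : Fin tn => ∑ u ∈ B i j, e u = 1)).card) with hNum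
    have hunion : ((Num.card : ℕ) : ℝ) * (D*L) ≤ (n:ℝ) * (2*(1-q))^tn := by
      have hsub : Num ⊆ univ.biUnion (fun i : Fin n =>
          univ.filter (fun e : Fin n → ZMod 2 => hammingWt e = w ∧
            tn ≤ 2 * (univ.filter (fun j : Fin tn => ∑ u ∈ B i j, e u = 1)).card)) := by
        intro e he
        rw [hNum, Finset.mem_filter] at he
        obtain ⟨-, hwt, i, hi⟩ := he
        exact Finset.mem_biUnion.mpr ⟨i, Finset.mem_univ i, by
          rw [Finset.mem_filter]; exact ⟨Finset.mem_univ e, hwt, hi⟩⟩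
      have h1 : Num.card ≤ ∑ i : Fin n, (univ.filter (fun e : Fin n → ZMod 2 =>
          hammingWt e = w ∧
          tn ≤ 2 * (univ.filter (fun j : Fin tn => ∑ u ∈ B i j, e u = 1)).card)).card :=
        le_trans (Finset.card_le_card hsub) (Finset.card_biUnion_le)
      calc ((Num.card : ℕ):ℝ) * (D*L)
          ≤ ((∑ i : Fin n, ((univ.filter (fun e : Fin n → ZMod 2 =>
              hammingWt e = w ∧ tn ≤ 2 * (univ.filter
                (fun j : Fin tn => ∑ u ∈ B i j, e u = 1)).card)).card : ℕ) : ℝ)) * (D*L) := by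
            apply mul_le_mul_of_nonneg_right _ (by positivity)
            exact_mod_cast h1
        _ = ∑ i : Fin n, (((univ.filter (fun e : Fin n → ZMod 2 =>
              hammingWt e = w ∧ tn ≤ 2 * (univ.filter
                (fun j : Fin tn => ∑ u ∈ B i j, e u = 1)).card)).card : ℕ) : ℝ) * (D*L) := by
            rw [Finset.sum_mul]
        _ ≤ ∑ _i : Fin n, (2*(1-q))^tn := Finset.sum_le_sum (fun i _ => hcount i)
        _ = (n:ℝ) * (2*(1-q))^tn := by
            rw [Finset.sum_const, Finset.card_univ, Fintype.card_fin, nsmul_eq_mul]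
    have hmode : 1/((n:ℝ)+1) ≤ (n.choose w : ℝ) * D := by
      have hm := mode_bound (n := n) (w := w) hn hwn
      calc 1/((n:ℝ)+1) ≤ (n.choose w : ℝ) * ((w:ℝ)/n)^w * (1 - (w:ℝ)/n)^(n-w) := hm
        _ = (n.choose w : ℝ) * D := by rw [hD, hθdef]; ring
    -- the analytic bound
    have hq1 : q < 1 := by linarith
    have h2q0 : (0:ℝ) < 2*(1-q) := by linarith
    have hZ : (2*(1-q))^tn / L ≤ Real.exp (-(c * Real.logb 2 n)/2) := by
      have h1q : (0:ℝ) < 1 - q := by linarith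
      have key : (4*q*(1-q)) = (2*(1-q))^2 / lam := by
        rw [hlam]
        field_simp [ne_of_gt hq0, ne_of_gt h1q]
        ring
      have hSL : (2*(1-q))^tn / L = (4*q*(1-q)) ^ ((tn:ℝ)/2) := by
        rw [key, Real.div_rpow (by positivity) (le_of_lt hlam0)]
        congr 1
        rw [← Real.rpow_natCast (2*(1-q)) 2, ← Real.rpow_mul (le_of_lt h2q0),
          ← Real.rpow_natCast (2*(1-q)) tn]
        congr 1
        push_cast
        ring
      have h4q : 4*q*(1-q) = 1 - A^2 := by rw [hAq]; ring
      have hApow : x ≤ A^2 := by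
        have hy2r : y ^ (2*r) = x := by
          rw [hydef, ← Real.rpow_natCast (x ^ (1/(2*(r:ℝ)))) (2*r),
            ← Real.rpow_mul (le_of_lt hx0)]
          rw [show (1/(2*(r:ℝ))) * ((2*r : ℕ) : ℝ) = 1 by push_cast; field_simp]
          exact Real.rpow_one x
        have hyθ : y ≤ 1 - 2*θ := by
          have hpy : 1 - 2*p = y := by rw [hpdef]; ring
          linarith
        have hmono : y^(2*r) ≤ (1-2*θ)^(2*r) := pow_le_pow_left₀ (le_of_lt hy0) hyθ _
        have hA2 : A^2 = (1-2*θ)^(2*r) := by rw [hA, ← pow_mul, Nat.mul_comm]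
        rw [hA2, ← hy2r]
        exact hmono
      have hx1' : 0 ≤ 1 - x := by linarith
      have h4q1x : 4*q*(1-q) ≤ 1 - x := by rw [h4q]; linarith
      calc (2*(1-q))^tn / L = (4*q*(1-q)) ^ ((tn:ℝ)/2) := hSL
        _ ≤ (1-x) ^ ((tn:ℝ)/2) :=
            Real.rpow_le_rpow (le_of_lt (by positivity : (0:ℝ) < 4*q*(1-q))) h4q1x
              (by positivity)
        _ ≤ (Real.exp (-x)) ^ ((tn:ℝ)/2) :=
            Real.rpow_le_rpow hx1' (by linarith [Real.add_one_le_exp (-x)]) (by positivity)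
        _ = Real.exp (-x * ((tn:ℝ)/2)) := (Real.exp_mul (-x) ((tn:ℝ)/2)).symm
        _ = Real.exp (-(c * Real.logb 2 n)/2) := by
            rw [hxdef]
            congr 1
            field_simp
      -- end hZ
    rw [hden]
    have hstep : ((Num.card : ℕ) : ℝ) / (n.choose w : ℝ)
        ≤ ((n:ℝ)+1) * ((n:ℝ) * ((2*(1-q))^tn / L)) := by
      rw [div_le_iff₀ hchoose_pos]
      have hNn : ((Num.card : ℕ):ℝ) ≤ ((n:ℝ) * (2*(1-q))^tn) / (D*L) := by
        rw [le_div_iff₀ (by positivity)]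
        exact hunion
      have hc1 : 1 ≤ ((n:ℝ)+1) * ((n.choose w:ℝ) * D) := by
        calc (1:ℝ) = ((n:ℝ)+1) * (1/((n:ℝ)+1)) := by field_simp
          _ ≤ ((n:ℝ)+1) * ((n.choose w:ℝ)*D) :=
              mul_le_mul_of_nonneg_left hmode (by positivity)
      calc ((Num.card : ℕ):ℝ) ≤ ((n:ℝ) * (2*(1-q))^tn)/(D*L) := hNn
        _ = ((n:ℝ) * (2*(1-q))^tn)/(D*L) * 1 := (mul_one _).symm
        _ ≤ ((n:ℝ) * (2*(1-q))^tn)/(D*L) * (((n:ℝ)+1) * ((n.choose w:ℝ)*D)) := by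
            apply mul_le_mul_of_nonneg_left hc1 (by positivity)
        _ = ((n:ℝ)+1) * ((n:ℝ) * ((2*(1-q))^tn / L)) * (n.choose w:ℝ) := by
            field_simp
    refine le_trans hstep ?_
    have hmul : (n:ℝ) * ((2*(1-q))^tn / L) ≤ (n:ℝ) * Real.exp (-(c * Real.logb 2 n)/2) :=
      mul_le_mul_of_nonneg_left hZ (le_of_lt hn')
    exact mul_le_mul_of_nonneg_left hmul (by positivity)

/-- **Virtually all error patterns of weight `(n/2)(1 − (c log₂ n / t(n))^{1/(2r)})`
are corrected by majority-logic decoding (Theorem 3 of the paper).**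
Fix `r ≥ 1`, an unbounded nondecreasing availability `t : ℕ → ℕ`, and `c ≥ 3`.
For each `n` let `p_n = (1/2)(1 − (c log₂ n / t n)^{1/(2r)})` (for `n` large enough
that `0 < c log₂ n / t n < 1`) and `w_n = ⌊p_n n⌋`, and suppose every index
`i ∈ {1,…,n}` has `t n` pairwise disjoint recovery sets of size `r` avoiding `i`.
An error vector `e ∈ 𝔽₂^n` of weight `w_n` is uncorrectable if some index `i` has
at least `t n / 2` recovery sets of odd error parity.  Then the fraction of
uncorrectable weight-`w_n` vectors among all weight-`w_n` vectors tends to `0`. -/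
theorem mld_corrects_virtually_all_errors_bsc
    (r : ℕ) (hr : 1 ≤ r) (t : ℕ → ℕ) (hmono : Monotone t)
    (hunbounded : Tendsto t atTop atTop)
    (c : ℝ) (hc : 3 ≤ c)
    (hlarge : ∀ᶠ n : ℕ in atTop,
      0 < c * Real.logb 2 n / t n ∧ c * Real.logb 2 n / t n < 1)
    (R : (n : ℕ) → Fin n → Fin (t n) → Finset (Fin n))
    (hdisj : ∀ n (i : Fin n) (j j' : Fin (t n)), j ≠ j' → Disjoint (R n i j) (R n i j'))
    (hnoti : ∀ n (i : Fin n) (j : Fin (t n)), i ∉ R n i j)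
    (hcard : ∀ n (i : Fin n) (j : Fin (t n)), (R n i j).card = r)
    (w : ℕ → ℕ)
    (hw : ∀ n : ℕ, w n
      = ⌊(1 / 2 : ℝ) * (1 - (c * Real.logb 2 n / t n) ^ (1 / (2 * (r : ℝ)))) * n⌋₊) :
    Tendsto
      (fun n : ℕ =>
        ((univ.filter (fun e : Fin n → ZMod 2 => hammingWt e = w n ∧
            ∃ i : Fin n, t n ≤ 2 * (univ.filter
              (fun j : Fin (t n) => ∑ u ∈ R n i j, e u = 1)).card)).card : ℝ)
        / ((univ.filter (fun e : Fin n → ZMod 2 => hammingWt e = w n)).card : ℝ))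
      atTop (nhds 0) := by
  have hlog2 : (0:ℝ) < Real.log 2 := Real.log_pos (by norm_num)
  have hK : (0:ℝ) < 3/(2*Real.log 2) - 2 := by
    have h2 : Real.log 2 < 0.6931471808 := Real.log_two_lt_d9
    have h3 : (2:ℝ) < 3/(2*Real.log 2) := by
      rw [lt_div_iff₀ (by positivity)]
      linarith
    linarith
  have hg : Tendsto (fun n : ℕ => 2*(n:ℝ)^(-(3/(2*Real.log 2) - 2))) atTop (nhds 0) := by
    have h1 : Tendsto (fun z : ℝ => z ^ (-(3/(2*Real.log 2) - 2))) atTop (nhds 0) :=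
      tendsto_rpow_neg_atTop hK
    have h2 : Tendsto (fun n : ℕ => ((n:ℝ)) ^ (-(3/(2*Real.log 2) - 2))) atTop (nhds 0) :=
      h1.comp tendsto_natCast_atTop_atTop
    have h3 := h2.const_mul (2:ℝ)
    simpa using h3
  apply squeeze_zero' ?nonneg ?bound hg
  case nonneg =>
    filter_upwards with n
    positivity
  case bound =>
    filter_upwards [hlarge, eventually_ge_atTop 1] with n hl hn1
    obtain ⟨hx0, hx1⟩ := hl
    have htn1 : 1 ≤ t n := by
      by_contra h
      have h0 : t n = 0 := by omega
      rw [h0] at hx0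
      norm_num at hx0
    have hper := per_n_bound n (t n) r hn1 htn1 hr c hx0 hx1 (R n) (hdisj n) (hcard n)
      (w n) (hw n)
    refine le_trans hper ?_
    have hn0 : (0:ℝ) < n := by exact_mod_cast hn1
    have hn1' : (1:ℝ) ≤ n := by exact_mod_cast hn1
    have hexpeq : Real.exp (-(c * Real.logb 2 n)/2) = (n:ℝ) ^ (-(c/(2*Real.log 2))) := by
      rw [Real.rpow_def_of_pos hn0, Real.logb]
      congr 1
      field_simp
    rw [hexpeq]
    set z : ℝ := -(c/(2*Real.log 2)) with hz
    have hX0 : (0:ℝ) ≤ (n:ℝ)^z := le_of_lt (Real.rpow_pos_of_pos hn0 z)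
    have h2cast : (n:ℝ)^(2:ℝ) = (n:ℝ)^(2:ℕ) := by
      rw [← Real.rpow_natCast (n:ℝ) 2]
      norm_num
    have e1 : ((n:ℝ)+1)*((n:ℝ)*(n:ℝ)^z) ≤ 2*((n:ℝ)^(2:ℝ) * (n:ℝ)^z) := by
      rw [h2cast]
      have hq : ((n:ℝ)+1)*(n:ℝ) ≤ 2*(n:ℝ)^(2:ℕ) := by
        rw [pow_two]
        have h := mul_le_mul_of_nonneg_right hn1' (le_of_lt hn0)
        linarith
      calc ((n:ℝ)+1)*((n:ℝ)*(n:ℝ)^z) = (((n:ℝ)+1)*(n:ℝ))*(n:ℝ)^z := by ring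
        _ ≤ (2*(n:ℝ)^(2:ℕ))*(n:ℝ)^z := mul_le_mul_of_nonneg_right hq hX0
        _ = 2*((n:ℝ)^(2:ℕ) * (n:ℝ)^z) := by ring
    have e2 : (n:ℝ)^(2:ℝ) * (n:ℝ)^z = (n:ℝ)^((2:ℝ)+z) := (Real.rpow_add hn0 _ _).symm
    have e3 : (n:ℝ)^((2:ℝ)+z) ≤ (n:ℝ)^(-(3/(2*Real.log 2) - 2)) := by
      apply Real.rpow_le_rpow_of_exponent_le hn1'
      rw [hz]
      have hdiv : 3/(2*Real.log 2) ≤ c/(2*Real.log 2) :=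
        (div_le_div_iff_of_pos_right (by positivity)).mpr hc
      linarith
    calc ((n:ℝ)+1)*((n:ℝ)*(n:ℝ)^z) ≤ 2*((n:ℝ)^(2:ℝ) * (n:ℝ)^z) := e1
      _ = 2*(n:ℝ)^((2:ℝ)+z) := by rw [e2]
      _ ≤ 2*(n:ℝ)^(-(3/(2*Real.log 2) - 2)) := by linarith [e3]
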